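/- Let m ≥ 8 be an integer and M₁ = [[2m,1,0],[m²,0,1],[1,0,0]], M₂ = [[2m+2,1,0],[(m+1)²,0,1],[1,0,0]]. Then for every n ≥ 1, every choice i₁,…,i_n ∈ {1,2}, and every nonzero vector x in the cone 𝔠, the product P = M_{i_n}⋯M_{i_1} satisfies ‖P x‖₁ ≥ (1.9m)^n ‖x‖₁; in particular the operator norm of any length-n product of matrices from {M₁,M₂} is at least (1.9m)^n. -/

import Mathlib

open Matrix

noncomputable section

/-- `M₁ = [[2m,1,0],[m²,0,1],[1,0,0]]`, the substitution matrix of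
`ζ_m : 0 ↦ 0^{2m} 1^{m²} 2, 1 ↦ 0, 2 ↦ 1`. -/
def M1 (m : ℤ) : Matrix (Fin 3) (Fin 3) ℝ :=
  !![2 * (m : ℝ), 1, 0; (m : ℝ) ^ 2, 0, 1; 1, 0, 0]

/-- `M₂ = [[2m+2,1,0],[(m+1)²,0,1],[1,0,0]]`, the substitution matrix of `ζ_{m+1}`. -/
def M2 (m : ℤ) : Matrix (Fin 3) (Fin 3) ℝ :=
  !![2 * (m : ℝ) + 2, 1, 0; ((m : ℝ) + 1) ^ 2, 0, 1; 1, 0, 0]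

/-- The cone `𝔠`: the zero vector together with all `(x₁,x₂,x₃)` with `x₃ > 0`,
`2.3 m ≤ x₁/x₃ ≤ 2.5 m + 3` and `m² ≤ x₂/x₃ ≤ m² + 2m + 2`. -/
def cone (m : ℤ) : Set (Fin 3 → ℝ) :=
  {x | x = 0 ∨ (0 < x 2 ∧
    2.3 * (m : ℝ) ≤ x 0 / x 2 ∧ x 0 / x 2 ≤ 2.5 * (m : ℝ) + 3 ∧
    (m : ℝ) ^ 2 ≤ x 1 / x 2 ∧ x 1 / x 2 ≤ (m : ℝ) ^ 2 + 2 * (m : ℝ) + 2)}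

/-- The `ℓ¹` norm on `ℝ³`. -/
def l1 (x : Fin 3 → ℝ) : ℝ := |x 0| + |x 1| + |x 2|

/-- The operator norm of a `3 × 3` real matrix with respect to the `ℓ¹` norm. -/
def l1OpNorm (P : Matrix (Fin 3) (Fin 3) ℝ) : ℝ :=
  sSup {c : ℝ | ∃ x : Fin 3 → ℝ, x ≠ 0 ∧ c = l1 (P.mulVec x) / l1 x}

set_option linter.unusedVariables false in
private theorem core1 (m a b t : ℝ) (hm : 8 ≤ m) (ht : 0 < t)
    (h1 : 2.3*m*t ≤ a) (h2 : a ≤ (2.5*m+3)*t) (h3 : m^2*t ≤ b) (h4 : b ≤ (m^2+2*m+2)*t) :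
    (2.3*m*a ≤ 2*m*a + b) ∧ (2*m*a + b ≤ (2.5*m+3)*a) ∧
    (m^2*a ≤ m^2*a + t) ∧ (m^2*a + t ≤ (m^2+2*m+2)*a) ∧
    (1.9*m*(a+b+t) ≤ (2*m*a+b)+(m^2*a+t)+a) ∧ (0 < a) ∧ (0 < b) := by
  have hm0 : (0:ℝ) ≤ m := by linarith
  have ha : 0 < a := lt_of_lt_of_le (by nlinarith) h1
  have hb : 0 < b := lt_of_lt_of_le (by nlinarith) h3
  refine ⟨by nlinarith, by nlinarith, by nlinarith, by nlinarith, ?_, ha, hb⟩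
  nlinarith [mul_le_mul_of_nonneg_left h1 (sq_nonneg m),
    mul_le_mul_of_nonneg_left h4 (by nlinarith : (0:ℝ) ≤ 1.9*m),
    mul_le_mul_of_nonneg_left h1 (by nlinarith : (0:ℝ) ≤ 0.1*m+1),
    mul_nonneg (mul_nonneg (mul_nonneg (sub_nonneg.2 hm) hm0) hm0) ht.le,
    mul_nonneg (mul_nonneg (sub_nonneg.2 hm) hm0) ht.le, ht.le]

set_option linter.unusedVariables false in
private theorem core2 (m a b t : ℝ) (hm : 8 ≤ m) (ht : 0 < t)
    (h1 : 2.3*m*t ≤ a) (h2 : a ≤ (2.5*m+3)*t) (h3 : m^2*t ≤ b) (h4 : b ≤ (m^2+2*m+2)*t) :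
    (2.3*m*a ≤ (2*m+2)*a + b) ∧ ((2*m+2)*a + b ≤ (2.5*m+3)*a) ∧
    (m^2*a ≤ (m+1)^2*a + t) ∧ ((m+1)^2*a + t ≤ (m^2+2*m+2)*a) ∧
    (1.9*m*(a+b+t) ≤ ((2*m+2)*a+b)+((m+1)^2*a+t)+a) ∧ (0 < a) ∧ (0 < b) := by
  have hm0 : (0:ℝ) ≤ m := by linarith
  have ha : 0 < a := lt_of_lt_of_le (by nlinarith) h1
  have hb : 0 < b := lt_of_lt_of_le (by nlinarith) h3
  refine ⟨by nlinarith, by nlinarith, by nlinarith, by nlinarith, ?_, ha, hb⟩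
  nlinarith [mul_le_mul_of_nonneg_left h1 (sq_nonneg m),
    mul_le_mul_of_nonneg_left h4 (by nlinarith : (0:ℝ) ≤ 1.9*m),
    mul_le_mul_of_nonneg_left h1 (by nlinarith : (0:ℝ) ≤ 0.1*m+1),
    mul_nonneg (mul_nonneg (mul_nonneg (sub_nonneg.2 hm) hm0) hm0) ht.le,
    mul_nonneg (mul_nonneg (sub_nonneg.2 hm) hm0) ht.le, ht.le]

private theorem l1_pos {x : Fin 3 → ℝ} (hx : x ≠ 0) : 0 < l1 x := by
  rcases lt_or_ge 0 (l1 x) with h | h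
  · exact h
  · exfalso; apply hx
    have ha0 := abs_nonneg (x 0); have ha1 := abs_nonneg (x 1); have ha2 := abs_nonneg (x 2)
    unfold l1 at h
    have h0 : x 0 = 0 := abs_eq_zero.mp (le_antisymm (by linarith) (abs_nonneg _))
    have h1 : x 1 = 0 := abs_eq_zero.mp (le_antisymm (by linarith) (abs_nonneg _))
    have h2 : x 2 = 0 := abs_eq_zero.mp (le_antisymm (by linarith) (abs_nonneg _))
    funext i
    fin_cases i
    · exact h0
    · exact h1
    · exact h2

set_option maxHeartbeats 1000000 in
/-- One step: applying `M1` or `M2` keeps the cone, keeps nonzeroness,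
and expands the `ℓ¹` norm by at least `1.9 m`. -/
private theorem step (m : ℤ) (hm : 8 ≤ m) (A : Matrix (Fin 3) (Fin 3) ℝ)
    (hA : A = M1 m ∨ A = M2 m) (x : Fin 3 → ℝ) (hx : x ∈ cone m) (hx0 : x ≠ 0) :
    A.mulVec x ∈ cone m ∧ A.mulVec x ≠ 0 ∧ 1.9 * (m : ℝ) * l1 x ≤ l1 (A.mulVec x) := by
  have hmr : (8:ℝ) ≤ (m:ℝ) := by exact_mod_cast hm
  rcases hx with h | ⟨ht, r1, r2, r3, r4⟩
  · exact absurd h hx0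
  have h1 : 2.3*(m:ℝ)*(x 2) ≤ x 0 := (le_div_iff₀ ht).mp r1
  have h2 : x 0 ≤ (2.5*(m:ℝ)+3)*(x 2) := (div_le_iff₀ ht).mp r2
  have h3 : (m:ℝ)^2*(x 2) ≤ x 1 := (le_div_iff₀ ht).mp r3
  have h4 : x 1 ≤ ((m:ℝ)^2+2*(m:ℝ)+2)*(x 2) := (div_le_iff₀ ht).mp r4
  rcases hA with rfl | rfl
  · obtain ⟨c1, c2, c3, c4, c5, hA0, hB0⟩ := core1 (m:ℝ) (x 0) (x 1) (x 2) hmr ht h1 h2 h3 h4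
    have e0 : (M1 m).mulVec x 0 = 2*(m:ℝ)*(x 0) + x 1 := by
      simp [M1, Matrix.mulVec, dotProduct, Fin.sum_univ_three]
    have e1 : (M1 m).mulVec x 1 = (m:ℝ)^2*(x 0) + x 2 := by
      simp [M1, Matrix.mulVec, dotProduct, Fin.sum_univ_three]
    have e2 : (M1 m).mulVec x 2 = x 0 := by
      simp [M1, Matrix.mulVec, dotProduct, Fin.sum_univ_three]
    have hy0 : 0 < 2*(m:ℝ)*(x 0) + x 1 := by nlinarith
    have hy1 : 0 < (m:ℝ)^2*(x 0) + x 2 := by nlinarith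
    refine ⟨Or.inr ?_, ?_, ?_⟩
    · rw [e0, e1, e2]
      exact ⟨hA0, (le_div_iff₀ hA0).mpr c1, (div_le_iff₀ hA0).mpr c2,
        (le_div_iff₀ hA0).mpr (by linarith), (div_le_iff₀ hA0).mpr c4⟩
    · intro h
      have h2' := congrFun h 2
      rw [e2] at h2'
      simp only [Pi.zero_apply] at h2'
      exact absurd h2' (ne_of_gt hA0)
    · unfold l1
      rw [e0, e1, e2, abs_of_pos hy0, abs_of_pos hy1, abs_of_pos hA0,
        abs_of_pos hB0, abs_of_pos ht]
      linarith [c5]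
  · obtain ⟨c1, c2, c3, c4, c5, hA0, hB0⟩ := core2 (m:ℝ) (x 0) (x 1) (x 2) hmr ht h1 h2 h3 h4
    have e0 : (M2 m).mulVec x 0 = (2*(m:ℝ)+2)*(x 0) + x 1 := by
      simp [M2, Matrix.mulVec, dotProduct, Fin.sum_univ_three]
    have e1 : (M2 m).mulVec x 1 = ((m:ℝ)+1)^2*(x 0) + x 2 := by
      simp [M2, Matrix.mulVec, dotProduct, Fin.sum_univ_three]
    have e2 : (M2 m).mulVec x 2 = x 0 := by
      simp [M2, Matrix.mulVec, dotProduct, Fin.sum_univ_three]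
    have hy0 : 0 < (2*(m:ℝ)+2)*(x 0) + x 1 := by nlinarith
    have hy1 : 0 < ((m:ℝ)+1)^2*(x 0) + x 2 := by nlinarith
    refine ⟨Or.inr ?_, ?_, ?_⟩
    · rw [e0, e1, e2]
      exact ⟨hA0, (le_div_iff₀ hA0).mpr c1, (div_le_iff₀ hA0).mpr c2,
        (le_div_iff₀ hA0).mpr (by linarith), (div_le_iff₀ hA0).mpr c4⟩
    · intro h
      have h2' := congrFun h 2
      rw [e2] at h2'
      simp only [Pi.zero_apply] at h2'
      exact absurd h2' (ne_of_gt hA0)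
    · unfold l1
      rw [e0, e1, e2, abs_of_pos hy0, abs_of_pos hy1, abs_of_pos hA0,
        abs_of_pos hB0, abs_of_pos ht]
      linarith [c5]

private theorem prod_bound (m : ℤ) (hm : 8 ≤ m) :
    ∀ L : List (Matrix (Fin 3) (Fin 3) ℝ), (∀ A ∈ L, A = M1 m ∨ A = M2 m) →
    ∀ x ∈ cone m, x ≠ 0 →
    L.prod.mulVec x ∈ cone m ∧ L.prod.mulVec x ≠ 0 ∧
      (1.9*(m:ℝ))^L.length * l1 x ≤ l1 (L.prod.mulVec x) := by
  have hmr : (8:ℝ) ≤ (m:ℝ) := by exact_mod_cast hm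
  intro L
  induction L with
  | nil =>
    intro _ x hx hx0
    simpa using ⟨hx, hx0⟩
  | cons A L ih =>
    intro hmem x hx hx0
    obtain ⟨hc, hnz, hb⟩ := ih (fun B hB => hmem B (List.mem_cons_of_mem A hB)) x hx hx0
    obtain ⟨hc', hnz', hb'⟩ := step m hm A (hmem A List.mem_cons_self)
      (L.prod.mulVec x) hc hnz
    have key : (A * L.prod).mulVec x = A.mulVec (L.prod.mulVec x) :=
      (Matrix.mulVec_mulVec _ _ _).symm
    rw [List.prod_cons, key]
    refine ⟨hc', hnz', ?_⟩
    have h19 : (0:ℝ) ≤ 1.9*(m:ℝ) := by nlinarith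
    calc (1.9*(m:ℝ))^(A :: L).length * l1 x
        = 1.9*(m:ℝ) * ((1.9*(m:ℝ))^L.length * l1 x) := by
          rw [List.length_cons, pow_succ]; ring
      _ ≤ 1.9*(m:ℝ) * l1 (L.prod.mulVec x) := by
          exact mul_le_mul_of_nonneg_left hb h19
      _ ≤ l1 (A.mulVec (L.prod.mulVec x)) := hb'
private theorem row_bound (P : Matrix (Fin 3) (Fin 3) ℝ) (x : Fin 3 → ℝ) (i : Fin 3) :
    |P i 0 * x 0 + P i 1 * x 1 + P i 2 * x 2| ≤ (|P i 0| + |P i 1| + |P i 2|) * l1 x := by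
  have hx0 : |x 0| ≤ l1 x := by unfold l1; linarith [abs_nonneg (x 1), abs_nonneg (x 2)]
  have hx1 : |x 1| ≤ l1 x := by unfold l1; linarith [abs_nonneg (x 0), abs_nonneg (x 2)]
  have hx2 : |x 2| ≤ l1 x := by unfold l1; linarith [abs_nonneg (x 0), abs_nonneg (x 1)]
  calc |P i 0 * x 0 + P i 1 * x 1 + P i 2 * x 2|
      ≤ |P i 0 * x 0| + |P i 1 * x 1| + |P i 2 * x 2| := abs_add_three _ _ _
    _ = |P i 0| * |x 0| + |P i 1| * |x 1| + |P i 2| * |x 2| := by rw [abs_mul, abs_mul, abs_mul]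
    _ ≤ (|P i 0| + |P i 1| + |P i 2|) * l1 x := by
        nlinarith [mul_le_mul_of_nonneg_left hx0 (abs_nonneg (P i 0)),
          mul_le_mul_of_nonneg_left hx1 (abs_nonneg (P i 1)),
          mul_le_mul_of_nonneg_left hx2 (abs_nonneg (P i 2))]

private theorem l1_mulVec_bound (P : Matrix (Fin 3) (Fin 3) ℝ) (x : Fin 3 → ℝ) :
    l1 (P.mulVec x) ≤ (|P 0 0| + |P 0 1| + |P 0 2| + |P 1 0| + |P 1 1| + |P 1 2|
      + |P 2 0| + |P 2 1| + |P 2 2|) * l1 x := by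
  have e : ∀ i, P.mulVec x i = P i 0 * x 0 + P i 1 * x 1 + P i 2 * x 2 := by
    intro i; simp [Matrix.mulVec, dotProduct, Fin.sum_univ_three]
  have hl1 : 0 ≤ l1 x := by
    unfold l1; positivity
  have b0 := row_bound P x 0
  have b1 := row_bound P x 1
  have b2 := row_bound P x 2
  show |P.mulVec x 0| + |P.mulVec x 1| + |P.mulVec x 2| ≤ _
  rw [e 0, e 1, e 2]
  nlinarith [b0, b1, b2]
/-- For `m ≥ 8`, every product `P = M_{i_n} ⋯ M_{i_1}` of `n ≥ 1` matrices from `{M₁, M₂}`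
satisfies `‖P x‖₁ ≥ (1.9 m)ⁿ ‖x‖₁` for all nonzero `x` in the cone `𝔠`; in particular the
(`ℓ¹`) operator norm of any such length-`n` product is at least `(1.9 m)ⁿ`. -/
theorem stmt12 (m : ℤ) (hm : 8 ≤ m) (n : ℕ) (hn : 1 ≤ n)
    (M : Fin n → Matrix (Fin 3) (Fin 3) ℝ)
    (hM : ∀ j, M j = M1 m ∨ M j = M2 m) :
    (∀ x ∈ cone m, x ≠ 0 →
      (1.9 * (m : ℝ)) ^ n * l1 x ≤ l1 (((List.ofFn M).prod).mulVec x)) ∧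
    (1.9 * (m : ℝ)) ^ n ≤ l1OpNorm (List.ofFn M).prod := by
  have hmr : (8:ℝ) ≤ (m:ℝ) := by exact_mod_cast hm
  have hmemL : ∀ A ∈ List.ofFn M, A = M1 m ∨ A = M2 m := by
    intro A hA
    rw [List.mem_ofFn] at hA
    obtain ⟨j, rfl⟩ := hA
    exact hM j
  have hlen : (List.ofFn M).length = n := List.length_ofFn
  have main := prod_bound m hm (List.ofFn M) hmemL
  constructor
  · intro x hx hx0
    have h := (main x hx hx0).2.2
    rwa [hlen] at h
  · set P := (List.ofFn M).prod with hP
    set x₀ : Fin 3 → ℝ := ![2.3*(m:ℝ), (m:ℝ)^2, 1] with hx₀def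
    have hx₀0 : x₀ 0 = 2.3*(m:ℝ) := rfl
    have hx₀1 : x₀ 1 = (m:ℝ)^2 := rfl
    have hx₀2 : x₀ 2 = 1 := rfl
    have hx₀cone : x₀ ∈ cone m := by
      refine Or.inr ?_
      rw [hx₀0, hx₀1, hx₀2]
      norm_num
      constructor <;> nlinarith
    have hx₀ne : x₀ ≠ 0 := by
      intro h
      have := congrFun h 2
      rw [hx₀2] at this
      simp at this
    obtain ⟨_, hPne, hPb⟩ := main x₀ hx₀cone hx₀ne
    rw [hlen] at hPb
    have hC : BddAbove {c : ℝ | ∃ x : Fin 3 → ℝ, x ≠ 0 ∧ c = l1 (P.mulVec x) / l1 x} := by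
      refine ⟨|P 0 0| + |P 0 1| + |P 0 2| + |P 1 0| + |P 1 1| + |P 1 2|
        + |P 2 0| + |P 2 1| + |P 2 2|, ?_⟩
      rintro c ⟨x, hx, rfl⟩
      exact (div_le_iff₀ (l1_pos hx)).mpr (l1_mulVec_bound P x)
    have hmem : l1 (P.mulVec x₀) / l1 x₀ ∈
        {c : ℝ | ∃ x : Fin 3 → ℝ, x ≠ 0 ∧ c = l1 (P.mulVec x) / l1 x} := ⟨x₀, hx₀ne, rfl⟩
    have hle : (1.9 * (m:ℝ))^n ≤ l1 (P.mulVec x₀) / l1 x₀ :=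
      (le_div_iff₀ (l1_pos hx₀ne)).mpr hPb
    exact hle.trans (le_csSup hC hmem)
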